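/- Let σ > 0 and let c : ℝ → ℝ be measurable with 0 < c_l ≤ c(x) ≤ c_u. Let ψ : ℝ → ℝ be a positive increasing C¹ solution of (σ²/2)ψ'' = cψ a.e. with ψ(0) = 1. Then ψ(x) ≤ max( exp(√(2c_l/σ²) x), exp(√(2c_u/σ²) x) ) for all x ∈ ℝ. Similarly, a positive decreasing solution φ with φ(0)=1 satisfies φ(x) ≤ max( exp(−√(2c_l/σ²) x), exp(−√(2c_u/σ²) x) ). -/

import Mathlib

open MeasureTheory


/-- Forward propagation: if `D` is continuous with `D b - D a = ∫ G`, `α * D ≤ G` a.e.,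
then a positive value of `D` propagates forward. -/
lemma prop_forward {D G : ℝ → ℝ} {α : ℝ} (hα : 0 ≤ α) (hDc : Continuous D)
    (hInt : ∀ a b : ℝ, IntervalIntegrable G volume a b)
    (hFTC : ∀ a b : ℝ, D b - D a = ∫ t in a..b, G t)
    (hG : ∀ᵐ t ∂(volume : Measure ℝ), α * D t ≤ G t)
    {x₀ x : ℝ} (hx : x₀ ≤ x) (h0 : 0 < D x₀) : D x₀ ≤ D x := by
  by_contra hcon
  push_neg at hcon
  set δ' := max (D x) (D x₀ / 2) with hδ'
  have hδ'0 : 0 < δ' := lt_max_of_lt_right (by linarith)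
  have hδ'lt : δ' < D x₀ := max_lt hcon (by linarith)
  set K := {t : ℝ | t ∈ Set.Icc x₀ x ∧ D t ≤ δ'} with hK
  have hxK : x ∈ K := ⟨⟨hx, le_refl x⟩, le_max_left _ _⟩
  have hKne : K.Nonempty := ⟨x, hxK⟩
  have hKbdd : BddBelow K := ⟨x₀, fun t ht => ht.1.1⟩
  have hKclosed : IsClosed K := by
    have : K = Set.Icc x₀ x ∩ {t | D t ≤ δ'} := rfl
    rw [this]
    exact isClosed_Icc.inter (isClosed_le hDc continuous_const)
  set s := sInf K with hs
  have hsK : s ∈ K := hKclosed.csInf_mem hKne hKbdd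
  have hx₀s : x₀ < s := by
    rcases lt_or_eq_of_le hsK.1.1 with h | h
    · exact h
    · exact absurd (h ▸ hsK.2) (not_le.mpr hδ'lt)
  -- on [x₀, s), D > δ'
  have hlt : ∀ t ∈ Set.Ico x₀ s, δ' < D t := by
    intro t ht
    by_contra hle
    push_neg at hle
    have : t ∈ K := ⟨⟨ht.1, le_trans ht.2.le hsK.1.2⟩, hle⟩
    exact absurd (csInf_le hKbdd this) (not_le.mpr ht.2)
  -- D ≥ δ' on [x₀, s] by continuity at s
  have hDs : δ' ≤ D s := by
    have h1 : s ∈ closure (Set.Ico x₀ s) := by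
      rw [closure_Ico (ne_of_lt hx₀s)]
      exact ⟨le_of_lt hx₀s, le_refl s⟩
    have h2 : Set.Ico x₀ s ⊆ {t | δ' ≤ D t} := fun t ht => (hlt t ht).le
    have h3 : IsClosed {t | δ' ≤ D t} := isClosed_le continuous_const hDc
    exact h3.closure_subset_iff.mpr h2 h1
  have hDnn : ∀ t ∈ Set.Icc x₀ s, 0 ≤ D t := by
    intro t ht
    rcases lt_or_eq_of_le ht.2 with h | h
    · exact le_trans hδ'0.le (hlt t ⟨ht.1, h⟩).le
    · exact h ▸ le_trans hδ'0.le hDs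
  have hint1 : (∫ t in x₀..s, α * D t) ≤ ∫ t in x₀..s, G t :=
    intervalIntegral.integral_mono_ae hx₀s.le
      ((hDc.const_smul α).intervalIntegrable _ _) (hInt _ _) hG
  have hint0 : (0:ℝ) ≤ ∫ t in x₀..s, α * D t :=
    intervalIntegral.integral_nonneg hx₀s.le (fun u hu => mul_nonneg hα (hDnn u hu))
  have := hFTC x₀ s
  have : D x₀ ≤ D s := by linarith
  linarith [hsK.2]

/-- Backward propagation version. -/
lemma prop_backward {D G : ℝ → ℝ} {α : ℝ} (hα : 0 ≤ α) (hDc : Continuous D)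
    (hInt : ∀ a b : ℝ, IntervalIntegrable G volume a b)
    (hFTC : ∀ a b : ℝ, D b - D a = ∫ t in a..b, G t)
    (hG : ∀ᵐ t ∂(volume : Measure ℝ), G t ≤ -(α * D t))
    {x₀ x : ℝ} (hx : x ≤ x₀) (h0 : 0 < D x₀) : D x₀ ≤ D x := by
  by_contra hcon
  push_neg at hcon
  set δ' := max (D x) (D x₀ / 2) with hδ'
  have hδ'0 : 0 < δ' := lt_max_of_lt_right (by linarith)
  have hδ'lt : δ' < D x₀ := max_lt hcon (by linarith)
  set K := {t : ℝ | t ∈ Set.Icc x x₀ ∧ D t ≤ δ'} with hK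
  have hxK : x ∈ K := ⟨⟨le_refl x, hx⟩, le_max_left _ _⟩
  have hKne : K.Nonempty := ⟨x, hxK⟩
  have hKbdd : BddAbove K := ⟨x₀, fun t ht => ht.1.2⟩
  have hKclosed : IsClosed K := by
    have : K = Set.Icc x x₀ ∩ {t | D t ≤ δ'} := rfl
    rw [this]
    exact isClosed_Icc.inter (isClosed_le hDc continuous_const)
  set s := sSup K with hs
  have hsK : s ∈ K := hKclosed.csSup_mem hKne hKbdd
  have hsx₀ : s < x₀ := by
    rcases lt_or_eq_of_le hsK.1.2 with h | h
    · exact h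
    · exact absurd (h ▸ hsK.2) (not_le.mpr hδ'lt)
  have hlt : ∀ t ∈ Set.Ioc s x₀, δ' < D t := by
    intro t ht
    by_contra hle
    push_neg at hle
    have : t ∈ K := ⟨⟨le_trans hsK.1.1 ht.1.le, ht.2⟩, hle⟩
    exact absurd (le_csSup hKbdd this) (not_le.mpr ht.1)
  have hDs : δ' ≤ D s := by
    have h1 : s ∈ closure (Set.Ioc s x₀) := by
      rw [closure_Ioc (ne_of_lt hsx₀)]
      exact ⟨le_refl s, le_of_lt hsx₀⟩
    have h2 : Set.Ioc s x₀ ⊆ {t | δ' ≤ D t} := fun t ht => (hlt t ht).le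
    have h3 : IsClosed {t | δ' ≤ D t} := isClosed_le continuous_const hDc
    exact h3.closure_subset_iff.mpr h2 h1
  have hDnn : ∀ t ∈ Set.Icc s x₀, 0 ≤ D t := by
    intro t ht
    rcases lt_or_eq_of_le ht.1 with h | h
    · exact le_trans hδ'0.le (hlt t ⟨h, ht.2⟩).le
    · exact h ▸ le_trans hδ'0.le hDs
  have hint1 : (∫ t in s..x₀, G t) ≤ ∫ t in s..x₀, -(α * D t) :=
    intervalIntegral.integral_mono_ae hsx₀.le (hInt _ _)
      ((hDc.const_smul α).neg.intervalIntegrable _ _) hG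
  have hint0 : (∫ t in s..x₀, -(α * D t)) ≤ 0 := by
    rw [intervalIntegral.integral_neg, neg_nonpos]
    exact intervalIntegral.integral_nonneg hsx₀.le (fun u hu => mul_nonneg hα (hDnn u hu))
  have := hFTC s x₀
  have : D x₀ ≤ D s := by linarith
  linarith [hsK.2]


lemma deriv_nonneg_of_monotone {f g : ℝ → ℝ} (hm : Monotone f)
    (hd : ∀ x, HasDerivAt f (g x) x) (x : ℝ) : 0 ≤ g x := by
  have h := (hd x)
  rw [hasDerivAt_iff_tendsto_slope] at h
  refine ge_of_tendsto h ?_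
  filter_upwards [self_mem_nhdsWithin] with y hy
  rcases lt_or_gt_of_ne (Ne.symm hy) with hlt | hlt
  · rw [slope_def_field]
    exact div_nonneg (by simpa using sub_nonneg.mpr (hm hlt.le)) (by linarith)
  · rw [slope_def_field]
    apply div_nonneg_of_nonpos (by simpa using sub_nonpos.mpr (hm hlt.le)) (by linarith)

lemma deriv_nonpos_of_antitone {f g : ℝ → ℝ} (hm : Antitone f)
    (hd : ∀ x, HasDerivAt f (g x) x) (x : ℝ) : g x ≤ 0 := by
  have : 0 ≤ -g x := by
    apply deriv_nonneg_of_monotone (f := fun t => -f t) (g := fun t => -g t)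
      (fun a b hab => neg_le_neg (hm hab))
    exact fun t => (hd t).neg
  linarith

set_option maxHeartbeats 1000000 in
/-- Growth estimates: a positive increasing `C¹` solution `ψ` of `(σ²/2)ψ'' = cψ` a.e. with
`ψ 0 = 1` satisfies `ψ x ≤ max (exp(√(2c_l/σ²) x)) (exp(√(2c_u/σ²) x))`, and a positive
decreasing solution `φ` with `φ 0 = 1` satisfies the analogous bound with negated rates. -/
theorem solution_growth_bounds (σ c_l c_u : ℝ) (c ψ ψ' ψ'' φ φ' φ'' : ℝ → ℝ)
    (hσ : 0 < σ) (hcl : 0 < c_l) (hc : ∀ x, c_l ≤ c x ∧ c x ≤ c_u) (hcm : Measurable c)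
    (hψpos : ∀ x, 0 < ψ x) (hψmono : StrictMono ψ) (hψ0 : ψ 0 = 1)
    (hψd : ∀ x, HasDerivAt ψ (ψ' x) x)
    (hψAC : ∀ x, ψ' x = ψ' 0 + ∫ t in (0:ℝ)..x, ψ'' t)
    (hψint : ∀ a b : ℝ, IntervalIntegrable ψ'' volume a b)
    (hψode : ∀ᵐ x ∂volume, σ ^ 2 / 2 * ψ'' x = c x * ψ x)
    (hφpos : ∀ x, 0 < φ x) (hφanti : StrictAnti φ) (hφ0 : φ 0 = 1)
    (hφd : ∀ x, HasDerivAt φ (φ' x) x)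
    (hφAC : ∀ x, φ' x = φ' 0 + ∫ t in (0:ℝ)..x, φ'' t)
    (hφint : ∀ a b : ℝ, IntervalIntegrable φ'' volume a b)
    (hφode : ∀ᵐ x ∂volume, σ ^ 2 / 2 * φ'' x = c x * φ x) :
    (∀ x : ℝ, ψ x ≤ max (Real.exp (Real.sqrt (2 * c_l / σ ^ 2) * x))
        (Real.exp (Real.sqrt (2 * c_u / σ ^ 2) * x))) ∧
    (∀ x : ℝ, φ x ≤ max (Real.exp (-(Real.sqrt (2 * c_l / σ ^ 2)) * x))
        (Real.exp (-(Real.sqrt (2 * c_u / σ ^ 2)) * x))) := by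
  have hσ2 : (0:ℝ) < σ ^ 2 := by positivity
  have hcu : 0 < c_u := lt_of_lt_of_le hcl (le_trans (hc 0).1 (hc 0).2)
  set αl := Real.sqrt (2 * c_l / σ ^ 2) with hαl
  set αu := Real.sqrt (2 * c_u / σ ^ 2) with hαu
  have hαl0 : 0 < αl := Real.sqrt_pos.mpr (by positivity)
  have hαu0 : 0 < αu := Real.sqrt_pos.mpr (by positivity)
  have hαlsq : αl ^ 2 = 2 * c_l / σ ^ 2 := Real.sq_sqrt (by positivity)
  have hαusq : αu ^ 2 = 2 * c_u / σ ^ 2 := Real.sq_sqrt (by positivity)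
  -- continuity facts
  have hψ'cont : Continuous ψ' := by
    have h := intervalIntegral.continuous_primitive hψint 0
    have he : ψ' = fun x => ψ' 0 + ∫ t in (0:ℝ)..x, ψ'' t := funext hψAC
    rw [he]; exact continuous_const.add h
  have hφ'cont : Continuous φ' := by
    have h := intervalIntegral.continuous_primitive hφint 0
    have he : φ' = fun x => φ' 0 + ∫ t in (0:ℝ)..x, φ'' t := funext hφAC
    rw [he]; exact continuous_const.add h
  have hψcont : Continuous ψ := by
    rw [continuous_iff_continuousAt]; exact fun x => (hψd x).continuousAt
  have hφcont : Continuous φ := by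
    rw [continuous_iff_continuousAt]; exact fun x => (hφd x).continuousAt
  have hψ'nn : ∀ x, 0 ≤ ψ' x := deriv_nonneg_of_monotone hψmono.monotone hψd
  have hφ'np : ∀ x, φ' x ≤ 0 := deriv_nonpos_of_antitone hφanti.antitone hφd
  -- FTC facts
  have hψFTC : ∀ a b : ℝ, ψ b - ψ a = ∫ t in a..b, ψ' t := fun a b =>
    (intervalIntegral.integral_eq_sub_of_hasDerivAt (fun t _ => hψd t)
      (hψ'cont.intervalIntegrable a b)).symm
  have hφFTC : ∀ a b : ℝ, φ b - φ a = ∫ t in a..b, φ' t := fun a b =>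
    (intervalIntegral.integral_eq_sub_of_hasDerivAt (fun t _ => hφd t)
      (hφ'cont.intervalIntegrable a b)).symm
  have hψ''FTC : ∀ a b : ℝ, ψ' b - ψ' a = ∫ t in a..b, ψ'' t := by
    intro a b
    rw [hψAC b, hψAC a]
    have h := intervalIntegral.integral_interval_sub_left (hψint 0 b) (hψint 0 a)
    linarith
  have hφ''FTC : ∀ a b : ℝ, φ' b - φ' a = ∫ t in a..b, φ'' t := by
    intro a b
    rw [hφAC b, hφAC a]
    have h := intervalIntegral.integral_interval_sub_left (hφint 0 b) (hφint 0 a)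
    linarith
  -- a.e. bounds on the second derivative
  have hψl : ∀ᵐ t ∂(volume : Measure ℝ), αl ^ 2 * ψ t ≤ ψ'' t := by
    filter_upwards [hψode] with t ht
    rw [hαlsq]
    have h1 : c_l * ψ t ≤ c t * ψ t := mul_le_mul_of_nonneg_right (hc t).1 (hψpos t).le
    rw [div_mul_eq_mul_div, div_le_iff₀ hσ2]
    nlinarith
  have hψu : ∀ᵐ t ∂(volume : Measure ℝ), ψ'' t ≤ αu ^ 2 * ψ t := by
    filter_upwards [hψode] with t ht
    rw [hαusq]
    have h1 : c t * ψ t ≤ c_u * ψ t := mul_le_mul_of_nonneg_right (hc t).2 (hψpos t).le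
    rw [div_mul_eq_mul_div, le_div_iff₀ hσ2]
    nlinarith
  have hφl : ∀ᵐ t ∂(volume : Measure ℝ), αl ^ 2 * φ t ≤ φ'' t := by
    filter_upwards [hφode] with t ht
    rw [hαlsq]
    have h1 : c_l * φ t ≤ c t * φ t := mul_le_mul_of_nonneg_right (hc t).1 (hφpos t).le
    rw [div_mul_eq_mul_div, div_le_iff₀ hσ2]
    nlinarith
  have hφu : ∀ᵐ t ∂(volume : Measure ℝ), φ'' t ≤ αu ^ 2 * φ t := by
    filter_upwards [hφode] with t ht
    rw [hαusq]
    have h1 : c t * φ t ≤ c_u * φ t := mul_le_mul_of_nonneg_right (hc t).2 (hφpos t).le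
    rw [div_mul_eq_mul_div, le_div_iff₀ hσ2]
    nlinarith
  ----------------------------------------------------------------
  -- Claim A : ψ' ≤ αu ψ
  have hA : ∀ x, ψ' x ≤ αu * ψ x := by
    intro x₀
    by_contra hcon
    push_neg at hcon
    set D : ℝ → ℝ := fun t => ψ' t - αu * ψ t with hD
    set G : ℝ → ℝ := fun t => ψ'' t - αu * ψ' t with hG
    have hDc : Continuous D := hψ'cont.sub (continuous_const.mul hψcont)
    have hInt : ∀ a b : ℝ, IntervalIntegrable G volume a b := fun a b =>
      (hψint a b).sub ((continuous_const.mul hψ'cont).intervalIntegrable a b)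
    have hFTC : ∀ a b : ℝ, D b - D a = ∫ t in a..b, G t := by
      intro a b
      have e : ∫ t in a..b, G t = (ψ' b - ψ' a) - αu * (ψ b - ψ a) := by
        simp only [hG]
        rw [intervalIntegral.integral_sub (g := fun t => αu * ψ' t) (hψint a b)
          ((continuous_const.mul hψ'cont).intervalIntegrable a b),
          intervalIntegral.integral_const_mul, ← hψ''FTC, ← hψFTC]
      rw [e]; simp only [hD]; ring
    have hGae : ∀ᵐ t ∂(volume : Measure ℝ), G t ≤ -(αu * D t) := by
      filter_upwards [hψu] with t ht
      simp only [hG, hD]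
      nlinarith
    have hδ0 : 0 < D x₀ := by simp only [hD]; linarith
    have hprop : ∀ y, y ≤ x₀ → D x₀ ≤ D y := fun y hy =>
      prop_backward hαu0.le hDc hInt hFTC hGae hy hδ0
    set δ := D x₀ with hδ
    set x := x₀ - ψ x₀ / δ - 1 with hxdef
    have hxle : x ≤ x₀ := by
      have : 0 < ψ x₀ / δ := div_pos (hψpos x₀) hδ0
      simp only [hxdef]; linarith
    have hm := intervalIntegral.integral_mono_on (μ := volume) hxle
      (intervalIntegrable_const (c := δ)) (hψ'cont.intervalIntegrable x x₀)
      (fun t ht => by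
        have h2 := hprop t ht.2
        have h3 : 0 ≤ αu * ψ t := mul_nonneg hαu0.le (hψpos t).le
        simp only [hD] at h2
        linarith)
    rw [intervalIntegral.integral_const, smul_eq_mul] at hm
    have h2 := hψFTC x x₀
    have h3 : (x₀ - x) * δ = ψ x₀ + δ := by
      simp only [hxdef]
      field_simp
      ring
    have := hψpos x
    linarith
  ----------------------------------------------------------------
  -- Claim B : αl ψ ≤ ψ'
  have hB : ∀ x, αl * ψ x ≤ ψ' x := by
    intro x₀
    by_contra hcon
    push_neg at hcon
    set D : ℝ → ℝ := fun t => αl * ψ t - ψ' t with hD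
    set G : ℝ → ℝ := fun t => αl * ψ' t - ψ'' t with hG
    have hDc : Continuous D := (continuous_const.mul hψcont).sub hψ'cont
    have hInt : ∀ a b : ℝ, IntervalIntegrable G volume a b := fun a b =>
      ((continuous_const.mul hψ'cont).intervalIntegrable a b).sub (hψint a b)
    have hFTC : ∀ a b : ℝ, D b - D a = ∫ t in a..b, G t := by
      intro a b
      have e : ∫ t in a..b, G t = αl * (ψ b - ψ a) - (ψ' b - ψ' a) := by
        simp only [hG]
        rw [intervalIntegral.integral_sub (f := fun t => αl * ψ' t)
          ((continuous_const.mul hψ'cont).intervalIntegrable a b) (hψint a b),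
          intervalIntegral.integral_const_mul, ← hψ''FTC, ← hψFTC]
      rw [e]; simp only [hD]; ring
    have hGae : ∀ᵐ t ∂(volume : Measure ℝ), G t ≤ -(αl * D t) := by
      filter_upwards [hψl] with t ht
      simp only [hG, hD]
      nlinarith
    have hδ0 : 0 < D x₀ := by simp only [hD]; linarith
    have hprop : ∀ y, y ≤ x₀ → D x₀ ≤ D y := fun y hy =>
      prop_backward hαl0.le hDc hInt hFTC hGae hy hδ0
    set δ := D x₀ with hδ
    set x := x₀ - ψ x₀ / δ with hxdef
    have hxle : x ≤ x₀ := by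
      have : 0 < ψ x₀ / δ := div_pos (hψpos x₀) hδ0
      simp only [hxdef]; linarith
    -- stage 2
    have h1 : ∫ t in x..x₀, G t ≤ ∫ t in x..x₀, -(αl * δ) := by
      apply intervalIntegral.integral_mono_ae_restrict hxle (hInt x x₀)
        (intervalIntegrable_const (c := -(αl * δ)))
      have hres : ∀ᵐ t ∂(volume.restrict (Set.Icc x x₀)), G t ≤ -(αl * D t) :=
        ae_restrict_of_ae hGae
      filter_upwards [hres, ae_restrict_mem measurableSet_Icc] with t ht hmem
      have h2 := hprop t hmem.2
      have : αl * δ ≤ αl * D t := mul_le_mul_of_nonneg_left h2 hαl0.le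
      linarith
    rw [intervalIntegral.integral_const, smul_eq_mul] at h1
    have h2 : D x₀ - D x ≤ (x₀ - x) * -(αl * δ) := by
      have := hFTC x x₀
      linarith
    have h3 : D x ≤ αl * ψ x₀ := by
      have h4 : ψ x ≤ ψ x₀ := hψmono.monotone hxle
      have h5 := hψ'nn x
      simp only [hD]
      nlinarith
    have h6 : δ * (x₀ - x) = ψ x₀ := by
      simp only [hxdef]
      field_simp
      ring
    have h7 : (x₀ - x) * -(αl * δ) = -(αl * ψ x₀) := by
      rw [← h6]; ring
    linarith
  ----------------------------------------------------------------
  -- Claim C : -(αu φ) ≤ φ'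
  have hC : ∀ x, -(αu * φ x) ≤ φ' x := by
    intro x₀
    by_contra hcon
    push_neg at hcon
    set D : ℝ → ℝ := fun t => -(φ' t) - αu * φ t with hD
    set G : ℝ → ℝ := fun t => -(φ'' t) - αu * φ' t with hG
    have hDc : Continuous D := hφ'cont.neg.sub (continuous_const.mul hφcont)
    have hInt : ∀ a b : ℝ, IntervalIntegrable G volume a b := fun a b =>
      (hφint a b).neg.sub ((continuous_const.mul hφ'cont).intervalIntegrable a b)
    have hFTC : ∀ a b : ℝ, D b - D a = ∫ t in a..b, G t := by
      intro a b
      have e : ∫ t in a..b, G t = -(φ' b - φ' a) - αu * (φ b - φ a) := by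
        simp only [hG]
        rw [intervalIntegral.integral_sub (f := fun t => -(φ'' t))
          (g := fun t => αu * φ' t) ((hφint a b).neg)
          ((continuous_const.mul hφ'cont).intervalIntegrable a b),
          intervalIntegral.integral_neg, intervalIntegral.integral_const_mul,
          ← hφ''FTC, ← hφFTC]
      rw [e]; simp only [hD]; ring
    have hGae : ∀ᵐ t ∂(volume : Measure ℝ), αu * D t ≤ G t := by
      filter_upwards [hφu] with t ht
      simp only [hG, hD]
      nlinarith
    have hδ0 : 0 < D x₀ := by simp only [hD]; linarith
    have hprop : ∀ y, x₀ ≤ y → D x₀ ≤ D y := fun y hy =>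
      prop_forward hαu0.le hDc hInt hFTC hGae hy hδ0
    set δ := D x₀ with hδ
    set x := x₀ + φ x₀ / δ + 1 with hxdef
    have hxle : x₀ ≤ x := by
      have : 0 < φ x₀ / δ := div_pos (hφpos x₀) hδ0
      simp only [hxdef]; linarith
    have hm := intervalIntegral.integral_mono_on (μ := volume) hxle
      (intervalIntegrable_const (c := δ)) (hφ'cont.neg.intervalIntegrable x₀ x)
      (fun t ht => by
        have h2 := hprop t ht.1
        have h3 : 0 ≤ αu * φ t := mul_nonneg hαu0.le (hφpos t).le
        simp only [hD] at h2
        show δ ≤ -(φ' t)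
        linarith)
    rw [intervalIntegral.integral_const, smul_eq_mul] at hm
    have hneg : (∫ t in x₀..x, -(φ' t)) = -∫ t in x₀..x, φ' t :=
      intervalIntegral.integral_neg
    rw [show (∫ u in x₀..x, (-φ') u) = ∫ t in x₀..x, -(φ' t) from rfl, hneg] at hm
    have h2 := hφFTC x₀ x
    have h3 : (x - x₀) * δ = φ x₀ + δ := by
      simp only [hxdef]
      field_simp
      ring
    have := hφpos x
    linarith
  ----------------------------------------------------------------
  -- Claim D : φ' ≤ -(αl φ)
  have hDcl : ∀ x, φ' x ≤ -(αl * φ x) := by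
    intro x₀
    by_contra hcon
    push_neg at hcon
    set D : ℝ → ℝ := fun t => φ' t + αl * φ t with hD
    set G : ℝ → ℝ := fun t => φ'' t + αl * φ' t with hG
    have hDc : Continuous D := hφ'cont.add (continuous_const.mul hφcont)
    have hInt : ∀ a b : ℝ, IntervalIntegrable G volume a b := fun a b =>
      (hφint a b).add ((continuous_const.mul hφ'cont).intervalIntegrable a b)
    have hFTC : ∀ a b : ℝ, D b - D a = ∫ t in a..b, G t := by
      intro a b
      have e : ∫ t in a..b, G t = (φ' b - φ' a) + αl * (φ b - φ a) := by
        simp only [hG]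
        rw [intervalIntegral.integral_add (g := fun t => αl * φ' t) (hφint a b)
          ((continuous_const.mul hφ'cont).intervalIntegrable a b),
          intervalIntegral.integral_const_mul, ← hφ''FTC, ← hφFTC]
      rw [e]; simp only [hD]; ring
    have hGae : ∀ᵐ t ∂(volume : Measure ℝ), αl * D t ≤ G t := by
      filter_upwards [hφl] with t ht
      simp only [hG, hD]
      nlinarith
    have hδ0 : 0 < D x₀ := by simp only [hD]; linarith
    have hprop : ∀ y, x₀ ≤ y → D x₀ ≤ D y := fun y hy =>
      prop_forward hαl0.le hDc hInt hFTC hGae hy hδ0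
    set δ := D x₀ with hδ
    set x := x₀ + φ x₀ / δ with hxdef
    have hxle : x₀ ≤ x := by
      have : 0 < φ x₀ / δ := div_pos (hφpos x₀) hδ0
      simp only [hxdef]; linarith
    have h1 : ∫ t in x₀..x, (αl * δ) ≤ ∫ t in x₀..x, G t := by
      apply intervalIntegral.integral_mono_ae_restrict hxle
        (intervalIntegrable_const (c := αl * δ)) (hInt x₀ x)
      have hres : ∀ᵐ t ∂(volume.restrict (Set.Icc x₀ x)), αl * D t ≤ G t :=
        ae_restrict_of_ae hGae
      filter_upwards [hres, ae_restrict_mem measurableSet_Icc] with t ht hmem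
      have h2 := hprop t hmem.1
      have : αl * δ ≤ αl * D t := mul_le_mul_of_nonneg_left h2 hαl0.le
      linarith
    rw [intervalIntegral.integral_const, smul_eq_mul] at h1
    have h2 : (x - x₀) * (αl * δ) ≤ D x - D x₀ := by
      have := hFTC x₀ x
      linarith
    have h3 : D x ≤ αl * φ x₀ := by
      have h4 : φ x ≤ φ x₀ := hφanti.antitone hxle
      have h5 := hφ'np x
      simp only [hD]
      nlinarith
    have h6 : δ * (x - x₀) = φ x₀ := by
      simp only [hxdef]
      field_simp
      ring
    have h7 : (x - x₀) * (αl * δ) = αl * φ x₀ := by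
      rw [← h6]; ring
    linarith
  ----------------------------------------------------------------
  -- exponential comparison
  have expbound : ∀ (f f' : ℝ → ℝ) (β : ℝ), (∀ t, HasDerivAt f (f' t) t) → f 0 = 1 →
      (∀ t, f' t ≤ β * f t) → ∀ x, 0 ≤ x → f x ≤ Real.exp (β * x) := by
    intro f f' β hd h0 hle x hx
    have hder : ∀ t, HasDerivAt (fun y => f y * Real.exp (-(β * y)))
        ((f' t - β * f t) * Real.exp (-(β * t))) t := by
      intro t
      have h1 : HasDerivAt (fun y : ℝ => -(β * y)) (-β) t := by
        simpa using ((hasDerivAt_id t).const_mul (-β))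
      have h2 := (Real.hasDerivAt_exp (-(β * t))).comp t h1
      have h3 := (hd t).mul h2
      simp only [Function.comp, Pi.mul_def] at h3
      exact h3.congr_deriv (by ring)
    have anti : Antitone fun y => f y * Real.exp (-(β * y)) := by
      apply antitone_of_deriv_nonpos
      · intro t; exact (hder t).differentiableAt
      · intro t
        rw [(hder t).deriv]
        apply mul_nonpos_of_nonpos_of_nonneg
        · linarith [hle t]
        · exact (Real.exp_pos _).le
    have h4 := anti hx
    simp only [mul_zero, neg_zero, Real.exp_zero, mul_one, h0] at h4
    calc f x = f x * Real.exp (-(β * x)) * Real.exp (β * x) := by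
            rw [mul_assoc, ← Real.exp_add]; simp
      _ ≤ 1 * Real.exp (β * x) := by
            apply mul_le_mul_of_nonneg_right h4 (Real.exp_pos _).le
      _ = Real.exp (β * x) := one_mul _
  have expbound' : ∀ (f f' : ℝ → ℝ) (β : ℝ), (∀ t, HasDerivAt f (f' t) t) → f 0 = 1 →
      (∀ t, β * f t ≤ f' t) → ∀ x, x ≤ 0 → f x ≤ Real.exp (β * x) := by
    intro f f' β hd h0 hle x hx
    have hder : ∀ t, HasDerivAt (fun y => f y * Real.exp (-(β * y)))
        ((f' t - β * f t) * Real.exp (-(β * t))) t := by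
      intro t
      have h1 : HasDerivAt (fun y : ℝ => -(β * y)) (-β) t := by
        simpa using ((hasDerivAt_id t).const_mul (-β))
      have h2 := (Real.hasDerivAt_exp (-(β * t))).comp t h1
      have h3 := (hd t).mul h2
      simp only [Function.comp, Pi.mul_def] at h3
      exact h3.congr_deriv (by ring)
    have mono : Monotone fun y => f y * Real.exp (-(β * y)) := by
      apply monotone_of_deriv_nonneg
      · intro t; exact (hder t).differentiableAt
      · intro t
        rw [(hder t).deriv]
        apply mul_nonneg
        · linarith [hle t]
        · exact (Real.exp_pos _).le
    have h4 := mono hx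
    simp only [mul_zero, neg_zero, Real.exp_zero, mul_one, h0] at h4
    calc f x = f x * Real.exp (-(β * x)) * Real.exp (β * x) := by
            rw [mul_assoc, ← Real.exp_add]; simp
      _ ≤ 1 * Real.exp (β * x) := by
            apply mul_le_mul_of_nonneg_right h4 (Real.exp_pos _).le
      _ = Real.exp (β * x) := one_mul _
  constructor
  · intro x
    rcases le_or_gt 0 x with hx | hx
    · exact le_trans (expbound ψ ψ' αu hψd hψ0 hA x hx) (le_max_right _ _)
    · exact le_trans (expbound' ψ ψ' αl hψd hψ0 hB x hx.le) (le_max_left _ _)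
  · intro x
    rcases le_or_gt 0 x with hx | hx
    · have := expbound φ φ' (-αl) hφd hφ0 (fun t => by linarith [hDcl t]) x hx
      refine le_trans ?_ (le_max_left _ _)
      simpa using this
    · have := expbound' φ φ' (-αu) hφd hφ0 (fun t => by linarith [hC t]) x hx.le
      refine le_trans ?_ (le_max_right _ _)
      simpa using this
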